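/- Let A be a c.e. subset of ℕ of Type 8. Then there exists a Type 8 generating set {D_0, D_1, …, R_0, R_1, …} for D(A) such that for every j: (1) D_i ∩ R_j = ∅ for all i > j; (2) the set R_j ∖ (D_0 ∪ … ∪ D_j) is infinite; and (3) ⋃_i D_i ⊆ ⋃_i R_i and the pairwise disjoint union ⋃_i R_i equals ℕ ∖ A. -/

import Mathlib

open Set Function

/-- A set of naturals is computably enumerable (c.e.) -/
def CESet (A : Set ℕ) : Prop := REPred (· ∈ A)

/-- A set of naturals is computable -/
def ComputableSet (A : Set ℕ) : Prop := ComputablePred (· ∈ A)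

/-- X ⊆* Y : X is almost contained in Y -/
def SubsetStar (X Y : Set ℕ) : Prop := (X \ Y).Finite

/-- X =* Y : X and Y differ by a finite set -/
def EqStar (X Y : Set ℕ) : Prop := (X \ Y).Finite ∧ (Y \ X).Finite

/-- G is a generating set for 𝒟(A): a countable family of c.e. sets, each disjoint
from A, such that every c.e. set disjoint from A is almost covered by finitely many
members of G. -/
def Generates (A : Set ℕ) (G : Set (Set ℕ)) : Prop :=
  G.Countable ∧ (∀ X ∈ G, CESet X) ∧ (∀ X ∈ G, Disjoint X A) ∧
  ∀ D : Set ℕ, CESet D → Disjoint D A →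
    ∃ F : Set (Set ℕ), F ⊆ G ∧ F.Finite ∧ SubsetStar D (⋃₀ F)

/-- S is simple -/
def SimpleSet (S : Set ℕ) : Prop :=
  CESet S ∧ Sᶜ.Infinite ∧ ∀ W : Set ℕ, CESet W → Disjoint W S → W.Finite

/-- A is 𝒟-maximal -/
def DMaximal (A : Set ℕ) : Prop :=
  CESet A ∧ ∀ W : Set ℕ, CESet W → ∃ D : Set ℕ, CESet D ∧ Disjoint D A ∧
    (SubsetStar W (A ∪ D) ∨ EqStar (W ∪ A ∪ D) Set.univ)

/-- M is r-maximal -/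
def RMaximal (M : Set ℕ) : Prop :=
  CESet M ∧ Mᶜ.Infinite ∧
    ∀ R : Set ℕ, ComputableSet R → (R ∩ Mᶜ).Finite ∨ (Rᶜ ∩ Mᶜ).Finite

/-- M is maximal -/
def MaximalSet (M : Set ℕ) : Prop :=
  CESet M ∧ Mᶜ.Infinite ∧
    ∀ W : Set ℕ, CESet W → M ⊆ W → (W \ M).Finite ∨ Wᶜ.Finite

/-- B is atomless -/
def AtomlessSet (B : Set ℕ) : Prop :=
  ∀ C : Set ℕ, CESet C → B ⊆ C → Cᶜ.Infinite →
    ∃ E : Set ℕ, CESet E ∧ SubsetStar C E ∧ (E \ C).Infinite ∧ Eᶜ.Infinite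

/-- A0, A1 form a Friedberg splitting of A -/
def FriedbergSplitting (A0 A1 A : Set ℕ) : Prop :=
  CESet A0 ∧ CESet A1 ∧ Disjoint A0 A1 ∧ A0 ∪ A1 = A ∧
    ∀ W : Set ℕ, CESet W → ¬ CESet (W \ A) → ¬ CESet (W \ A0) ∧ ¬ CESet (W \ A1)

/-- E is a major subset of D -/
def MajorIn (E D : Set ℕ) : Prop :=
  CESet E ∧ CESet D ∧ E ⊆ D ∧ (D \ E).Infinite ∧
    ∀ W : Set ℕ, CESet W → SubsetStar Dᶜ W → SubsetStar Eᶜ W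

/-- H is hh-simple: the lattice of c.e. supersets of H mod finite is a boolean algebra -/
def HHSimple (H : Set ℕ) : Prop :=
  CESet H ∧ Hᶜ.Infinite ∧
    ∀ W : Set ℕ, CESet W → ∃ V : Set ℕ, CESet V ∧
      EqStar ((W ∪ H) ∩ (V ∪ H)) H ∧ EqStar (W ∪ V ∪ H) Set.univ

/-- A is strongly r-separable -/
def StronglyRSeparable (A : Set ℕ) : Prop :=
  ∀ B : Set ℕ, CESet B → Disjoint B A →
    ∃ C : Set ℕ, ComputableSet C ∧ B ⊆ C ∧ Disjoint C A ∧ (C \ B).Infinite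

/-- Structure of a Type 5 generating family: D0 together with the R_i. -/
def Type5Family (D0 : Set ℕ) (R : ℕ → Set ℕ) : Prop :=
  CESet D0 ∧ ¬ ComputableSet D0 ∧ D0.Infinite ∧
  Function.Injective R ∧ (∀ i, D0 ≠ R i) ∧
  (∀ i, ComputableSet (R i) ∧ (R i).Infinite) ∧
  Pairwise (Function.onFun Disjoint R) ∧
  (∀ i, Disjoint D0 (R i))

/-- Structure of a Type 7 generating family: D0 together with the R_i. -/
def Type7Family (D0 : Set ℕ) (R : ℕ → Set ℕ) : Prop :=
  CESet D0 ∧ ¬ ComputableSet D0 ∧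
  Function.Injective R ∧ (∀ i, D0 ≠ R i) ∧
  (∀ i, ComputableSet (R i) ∧ (R i).Infinite) ∧
  Pairwise (Function.onFun Disjoint R) ∧
  {i : ℕ | (D0 ∩ R i).Nonempty}.Infinite

/-- Structure of a Type 8 generating family: the D_i together with the R_i. -/
def Type8Family (D R : ℕ → Set ℕ) : Prop :=
  Function.Injective D ∧ Function.Injective R ∧ (∀ i j, D i ≠ R j) ∧
  (∀ i, CESet (D i) ∧ ¬ ComputableSet (D i)) ∧
  Pairwise (Function.onFun Disjoint D) ∧
  (∀ i, ComputableSet (R i) ∧ (R i).Infinite) ∧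
  Pairwise (Function.onFun Disjoint R)

/-- Structure of a Type 9 generating family: the nested D_i together with the R_i. -/
def Type9Family (D R : ℕ → Set ℕ) : Prop :=
  Function.Injective R ∧ (∀ i j, D i ≠ R j) ∧
  (∀ i, ComputableSet (R i) ∧ (R i).Infinite) ∧
  Pairwise (Function.onFun Disjoint R) ∧
  (∀ i, CESet (D i) ∧ ¬ ComputableSet (D i) ∧ (D i).Infinite) ∧
  (∀ l, D l ⊆ D (l + 1)) ∧
  (∀ l, ¬ CESet (D (l + 1) \ D l)) ∧
  (∀ l, {j : ℕ | (R j \ D l).Infinite}.Infinite)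

def IsType1 (G : Set (Set ℕ)) : Prop := G = {∅}

def IsType2 (G : Set (Set ℕ)) : Prop :=
  ∃ R : Set ℕ, G = {R} ∧ ComputableSet R ∧ R.Infinite

def IsType3 (G : Set (Set ℕ)) : Prop :=
  ∃ W : Set ℕ, G = {W} ∧ CESet W ∧ ¬ ComputableSet W ∧ W.Infinite

def IsType4 (G : Set (Set ℕ)) : Prop :=
  ∃ R : ℕ → Set ℕ, G = Set.range R ∧ Function.Injective R ∧
    (∀ i, ComputableSet (R i) ∧ (R i).Infinite) ∧
    Pairwise (Function.onFun Disjoint R)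

def IsType5 (G : Set (Set ℕ)) : Prop :=
  ∃ (D0 : Set ℕ) (R : ℕ → Set ℕ), G = insert D0 (Set.range R) ∧ Type5Family D0 R

def IsType6 (G : Set (Set ℕ)) : Prop :=
  ∃ D : ℕ → Set ℕ, G = Set.range D ∧ Function.Injective D ∧
    (∀ i, CESet (D i) ∧ ¬ ComputableSet (D i) ∧ (D i).Infinite) ∧
    Pairwise (Function.onFun Disjoint D)

def IsType7 (G : Set (Set ℕ)) : Prop :=
  ∃ (D0 : Set ℕ) (R : ℕ → Set ℕ), G = insert D0 (Set.range R) ∧ Type7Family D0 R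

def IsType8 (G : Set (Set ℕ)) : Prop :=
  ∃ D R : ℕ → Set ℕ, G = Set.range D ∪ Set.range R ∧ Type8Family D R

def IsType9 (G : Set (Set ℕ)) : Prop :=
  ∃ D R : ℕ → Set ℕ, G = Set.range D ∪ Set.range R ∧ Type9Family D R

def IsType10 (G : Set (Set ℕ)) : Prop :=
  ∃ D : ℕ → Set ℕ, G = Set.range D ∧
    (∀ i, CESet (D i) ∧ ¬ ComputableSet (D i) ∧ (D i).Infinite) ∧
    (∀ l, D l ⊆ D (l + 1)) ∧
    (∀ l, ¬ CESet (D (l + 1) \ D l))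

/-- G is a generating set of Type n (n = 1, …, 10). -/
def GenTypeN (n : ℕ) (G : Set (Set ℕ)) : Prop :=
  match n with
  | 1 => IsType1 G
  | 2 => IsType2 G
  | 3 => IsType3 G
  | 4 => IsType4 G
  | 5 => IsType5 G
  | 6 => IsType6 G
  | 7 => IsType7 G
  | 8 => IsType8 G
  | 9 => IsType9 G
  | 10 => IsType10 G
  | _ => False

/-- The c.e. set A is of Type n: 𝒟(A) has a generating set of Type n
but no generating set of any Type m < n. -/
def SetOfType (A : Set ℕ) (n : ℕ) : Prop :=
  (∃ G : Set (Set ℕ), Generates A G ∧ GenTypeN n G) ∧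
  ∀ m : ℕ, m < n → ¬ ∃ G : Set (Set ℕ), Generates A G ∧ GenTypeN m G

/-- (F_i) is an A-special list. -/
def ASpecialList (A : Set ℕ) (F : ℕ → Set ℕ) : Prop :=
  F 0 = A ∧ (∀ i, CESet (F i) ∧ ¬ ComputableSet (F i)) ∧
  Pairwise (Function.onFun Disjoint F) ∧
  ∀ W : Set ℕ, CESet W → ∃ i : ℕ,
    SubsetStar W (⋃ l ≤ i, F l) ∨ EqStar (W ∪ ⋃ l ≤ i, F l) Set.univ

section Helpers

open Classical

lemma rePred_or {p q : ℕ → Prop} (hp : REPred p) (hq : REPred q) :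
    REPred fun a => p a ∨ q a := by
  unfold REPred at *
  obtain ⟨k, hk, H⟩ := Partrec.merge' hp hq
  refine hk.of_eq fun a => Part.ext' ?_ fun _ _ => rfl
  rw [(H a).2]
  simp [Part.assert]

lemma rePred_and {p q : ℕ → Prop} (hp : REPred p) (hq : REPred q) :
    REPred fun a => p a ∧ q a := by
  unfold REPred at *
  have h2 : Partrec₂ (fun (a : ℕ) (_ : Unit) => Part.assert (q a) fun _ => Part.some ()) :=
    hq.comp Computable.fst
  have := hp.bind h2
  refine this.of_eq fun a => Part.ext' ?_ fun _ _ => rfl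
  simp [Part.assert, And.comm]

lemma computableSet_empty : ComputableSet (∅ : Set ℕ) := by
  refine ComputablePred.computable_iff.2 ⟨fun _ => false, Computable.const _, ?_⟩
  simp

lemma ComputableSet.union {X Y : Set ℕ} (hX : ComputableSet X) (hY : ComputableSet Y) :
    ComputableSet (X ∪ Y) := by
  have h1 : REPred fun a => a ∈ X ∨ a ∈ Y := rePred_or hX.to_re hY.to_re
  have h2 : REPred fun a => ¬ a ∈ X ∧ ¬ a ∈ Y := rePred_and hX.not.to_re hY.not.to_re
  exact ComputablePred.computable_iff_re_compl_re'.2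
    ⟨h1.of_eq fun a => by simp, h2.of_eq fun a => by simp [not_or]⟩

lemma ComputableSet.compl {X : Set ℕ} (hX : ComputableSet X) : ComputableSet Xᶜ := by
  have := hX.not
  exact this.of_eq fun a => by simp

lemma CESet.union {X Y : Set ℕ} (hX : CESet X) (hY : CESet Y) : CESet (X ∪ Y) :=
  (rePred_or hX hY).of_eq fun a => by simp

lemma CESet.inter {X Y : Set ℕ} (hX : CESet X) (hY : CESet Y) : CESet (X ∩ Y) :=
  (rePred_and hX hY).of_eq fun a => by simp

lemma ComputableSet.to_ce {X : Set ℕ} (hX : ComputableSet X) : CESet X :=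
  ComputablePred.to_re hX

lemma ComputableSet.inter {X Y : Set ℕ} (hX : ComputableSet X) (hY : ComputableSet Y) :
    ComputableSet (X ∩ Y) := by
  have := (hX.compl.union hY.compl).compl
  exact this.of_eq fun a => by simp [Set.mem_compl_iff, not_or]

lemma ComputableSet.diff {X Y : Set ℕ} (hX : ComputableSet X) (hY : ComputableSet Y) :
    ComputableSet (X \ Y) := hX.inter hY.compl

lemma CESet.diff {X C : Set ℕ} (hX : CESet X) (hC : ComputableSet C) : CESet (X \ C) :=
  (rePred_and hX hC.compl.to_ce).of_eq fun a => by simp [Set.mem_diff]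

lemma computableSet_singleton (a : ℕ) : ComputableSet ({a} : Set ℕ) := by
  refine ComputablePred.computable_iff.2 ⟨fun x => decide (x = a), ?_, ?_⟩
  · exact (Primrec.eq.decide.comp Primrec.id (Primrec.const a)).to_comp
  · funext x; simp

lemma computableSet_of_finite {X : Set ℕ} (h : X.Finite) : ComputableSet X := by
  refine Set.Finite.induction_on (motive := fun s _ => ComputableSet s) X h computableSet_empty ?_
  intro a s _ _ ih
  have := (computableSet_singleton a).union ih
  exact this.of_eq fun x => by simp

lemma infinite_of_not_computable {X : Set ℕ} (h : ¬ ComputableSet X) : X.Infinite := by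
  by_contra hfin
  exact h (computableSet_of_finite (Set.not_infinite.1 hfin))

lemma computableSet_biUnion (s : Finset ℕ) {f : ℕ → Set ℕ}
    (h : ∀ i ∈ s, ComputableSet (f i)) : ComputableSet (⋃ i ∈ s, f i) := by
  classical
  induction s using Finset.induction_on with
  | empty => simpa using computableSet_empty
  | @insert a s hx ih =>
    have h1 : ComputableSet (f a) := h a (Finset.mem_insert_self a s)
    have h2 := ih fun i hi => h i (Finset.mem_insert_of_mem hi)
    have := h1.union h2
    exact this.of_eq fun x => by simp [Set.mem_iUnion]

lemma ceSet_biUnion (s : Finset ℕ) {f : ℕ → Set ℕ}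
    (h : ∀ i ∈ s, CESet (f i)) : CESet (⋃ i ∈ s, f i) := by
  classical
  induction s using Finset.induction_on with
  | empty => simpa using computableSet_empty.to_ce
  | @insert a s hx ih =>
    have h1 : CESet (f a) := h a (Finset.mem_insert_self a s)
    have h2 := ih fun i hi => h i (Finset.mem_insert_of_mem hi)
    have := h1.union h2
    exact this.of_eq fun x => by simp [Set.mem_iUnion]

/-- Post-style: a c.e. piece of a computable set whose complementary piece is c.e.
is computable. -/
lemma computable_piece {V X Y : Set ℕ} (hV : ComputableSet V) (hX : CESet X) (hY : CESet Y)
    (hdisj : Disjoint X Y) (hun : X ∪ Y = V) : ComputableSet X := by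
  classical
  refine ComputablePred.computable_iff_re_compl_re'.2 ⟨hX, ?_⟩
  have h1 : REPred fun a => (¬ a ∈ V) ∨ a ∈ Y := rePred_or hV.not.to_re hY
  refine h1.of_eq fun a => ?_
  constructor
  · rintro (hnv | hy)
    · intro hx; exact hnv (hun ▸ Set.mem_union_left _ hx)
    · intro hx; exact Set.disjoint_left.1 hdisj hx hy
  · intro hnx
    by_cases hv : a ∈ V
    · rw [← hun] at hv; rcases hv with h | h
      · exact absurd h hnx
      · exact Or.inr h
    · exact Or.inl hv

end Helpers
section StarLemmas

lemma subsetStar_of_subset {X Y : Set ℕ} (h : X ⊆ Y) : SubsetStar X Y := by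
  have : X \ Y = ∅ := Set.diff_eq_empty.2 h
  rw [SubsetStar, this]; exact Set.finite_empty

lemma subsetStar_of_finite {X : Set ℕ} (h : X.Finite) (Y : Set ℕ) : SubsetStar X Y :=
  h.subset Set.diff_subset

lemma SubsetStar.mono_right {X Y Y' : Set ℕ} (h : SubsetStar X Y) (h' : Y ⊆ Y') :
    SubsetStar X Y' :=
  h.subset fun x hx => ⟨hx.1, fun hy => hx.2 (h' hy)⟩

lemma SubsetStar.trans {X Y Z : Set ℕ} (h : SubsetStar X Y) (h' : SubsetStar Y Z) :
    SubsetStar X Z := by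
  refine (h.union h').subset fun x hx => ?_
  by_cases hy : x ∈ Y
  · exact Or.inr ⟨hy, hx.2⟩
  · exact Or.inl ⟨hx.1, hy⟩

lemma subset_trans_subsetStar {X Y Z : Set ℕ} (h : X ⊆ Y) (h' : SubsetStar Y Z) :
    SubsetStar X Z :=
  (subsetStar_of_subset h).trans h'

lemma SubsetStar.union_left {X X' Y : Set ℕ} (h : SubsetStar X Y) (h' : SubsetStar X' Y) :
    SubsetStar (X ∪ X') Y := by
  refine (h.union h').subset fun x hx => ?_
  rcases hx.1 with hx1 | hx1
  · exact Or.inl ⟨hx1, hx.2⟩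
  · exact Or.inr ⟨hx1, hx.2⟩

lemma SubsetStar.absorb_finite {X Y F : Set ℕ} (h : SubsetStar X (Y ∪ F)) (hF : F.Finite) :
    SubsetStar X Y := by
  refine (h.union hF).subset fun x hx => ?_
  by_cases hf : x ∈ F
  · exact Or.inr hf
  · exact Or.inl ⟨hx.1, fun hy => hy.elim hx.2 hf⟩

/-- Transfer a generating set along almost-coverage of each member. -/
lemma generates_trans {A : Set ℕ} {G G' : Set (Set ℕ)} (hG : Generates A G)
    (hG'c : G'.Countable) (hce : ∀ X ∈ G', CESet X) (hdisj : ∀ X ∈ G', Disjoint X A)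
    (hcov : ∀ X ∈ G, ∃ F' : Set (Set ℕ), F' ⊆ G' ∧ F'.Finite ∧ SubsetStar X (⋃₀ F')) :
    Generates A G' := by
  classical
  have hcov' : ∀ X : Set ℕ, ∃ F' : Set (Set ℕ),
      X ∈ G → F' ⊆ G' ∧ F'.Finite ∧ SubsetStar X (⋃₀ F') := by
    intro X
    by_cases hX : X ∈ G
    · obtain ⟨F', h⟩ := hcov X hX; exact ⟨F', fun _ => h⟩
    · exact ⟨∅, fun h => absurd h hX⟩
  choose g hg using hcov'
  refine ⟨hG'c, hce, hdisj, fun W hW hWA => ?_⟩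
  obtain ⟨F, hFG, hFfin, hWF⟩ := hG.2.2.2 W hW hWA
  refine ⟨⋃ X ∈ F, g X, ?_, ?_, ?_⟩
  · exact Set.iUnion₂_subset fun X hX => (hg X (hFG hX)).1
  · exact hFfin.biUnion fun X hX => (hg X (hFG hX)).2.1
  · have hsub : W \ ⋃₀ (⋃ X ∈ F, g X) ⊆ (W \ ⋃₀ F) ∪ ⋃ X ∈ F, (X \ ⋃₀ (g X)) := by
      intro x hx
      by_cases hxf : x ∈ ⋃₀ F
      · obtain ⟨X, hXF, hxX⟩ := hxf
        refine Or.inr (Set.mem_biUnion hXF ⟨hxX, fun hxg => hx.2 ?_⟩)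
        obtain ⟨Y, hYg, hxY⟩ := hxg
        exact ⟨Y, Set.mem_biUnion hXF hYg, hxY⟩
      · exact Or.inl ⟨hx.1, hxf⟩
    exact ((hWF.union (hFfin.biUnion fun X hX => (hg X (hFG hX)).2.2)).subset hsub)

end StarLemmas
section PiecesLemmas

open Classical in
/-- Split an arbitrary set `Z` into countably many finite pieces. -/
noncomputable def absorbPieces (Z : Set ℕ) : ℕ → Set ℕ :=
  if Z.Finite then (fun j => if j = 0 then Z else ∅)
  else fun j => {Nat.nth (· ∈ Z) j}

lemma absorbPieces_finite (Z : Set ℕ) (j : ℕ) : (absorbPieces Z j).Finite := by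
  classical
  rw [absorbPieces]
  by_cases h : Z.Finite
  · rw [if_pos h]; by_cases hj : j = 0 <;> simp [hj, h]
  · rw [if_neg h]; exact Set.finite_singleton _

lemma absorbPieces_subset (Z : Set ℕ) (j : ℕ) : absorbPieces Z j ⊆ Z := by
  classical
  rw [absorbPieces]
  by_cases h : Z.Finite
  · rw [if_pos h]; by_cases hj : j = 0 <;> simp [hj]
  · rw [if_neg h]
    simp only [Set.singleton_subset_iff]
    exact Nat.nth_mem_of_infinite h j

lemma absorbPieces_disjoint (Z : Set ℕ) : Pairwise (Function.onFun Disjoint (absorbPieces Z)) := by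
  classical
  intro i j hij
  unfold Function.onFun
  rw [absorbPieces]
  by_cases h : Z.Finite
  · rw [if_pos h]
    rcases Nat.eq_zero_or_pos i with rfl | hi
    · rw [if_neg (Ne.symm hij)]; simp
    · rw [if_neg (Nat.pos_iff_ne_zero.1 hi)]; simp
  · rw [if_neg h]
    rw [Set.disjoint_singleton_left]
    simp only [Set.mem_singleton_iff]
    exact fun e => hij (Nat.nth_injective h e)

lemma absorbPieces_iUnion (Z : Set ℕ) : (⋃ j, absorbPieces Z j) = Z := by
  classical
  rw [absorbPieces]
  by_cases h : Z.Finite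
  · rw [if_pos h]
    apply Set.Subset.antisymm
    · refine Set.iUnion_subset fun j => ?_
      by_cases hj : j = 0 <;> simp [hj]
    · intro x hx; exact Set.mem_iUnion.2 ⟨0, by simp [hx]⟩
  · rw [if_neg h]
    apply Set.Subset.antisymm
    · refine Set.iUnion_subset fun j => ?_
      simp only [Set.singleton_subset_iff]
      exact Nat.nth_mem_of_infinite h j
    · intro x hx
      exact Set.mem_iUnion.2 ⟨Nat.count (· ∈ Z) x, by simp [Nat.nth_count hx]⟩

lemma nth_surj {I : Set ℕ} (hI : I.Infinite) {m : ℕ} (hm : m ∈ I) :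
    ∃ j, Nat.nth (· ∈ I) j = m := by
  classical
  exact ⟨Nat.count (· ∈ I) m, Nat.nth_count hm⟩

lemma nth_mem' {I : Set ℕ} (hI : I.Infinite) (j : ℕ) : Nat.nth (· ∈ I) j ∈ I :=
  Nat.nth_mem_of_infinite hI j

/-- Disjointification of a sequence of sets. -/
def disjPieces (Q : ℕ → Set ℕ) (m : ℕ) : Set ℕ :=
  Q m \ ⋃ m' ∈ Finset.range m, Q m'

lemma disjPieces_subset (Q : ℕ → Set ℕ) (m : ℕ) : disjPieces Q m ⊆ Q m :=
  Set.diff_subset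

lemma disjPieces_computable {Q : ℕ → Set ℕ} (hQ : ∀ m, ComputableSet (Q m)) (m : ℕ) :
    ComputableSet (disjPieces Q m) :=
  (hQ m).diff (computableSet_biUnion _ fun i _ => hQ i)

lemma disjPieces_disjoint (Q : ℕ → Set ℕ) :
    Pairwise (Function.onFun Disjoint (disjPieces Q)) := by
  have key : ∀ i j, i < j → Disjoint (disjPieces Q i) (disjPieces Q j) := by
    intro i j hij
    rw [Set.disjoint_left]
    intro x hxi hxj
    exact hxj.2 (Set.mem_biUnion (Finset.mem_range.2 hij) (disjPieces_subset Q i hxi))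
  intro i j hij
  rcases lt_or_gt_of_ne hij with h | h
  · exact key i j h
  · exact (key j i h).symm

lemma disjPieces_cover (Q : ℕ → Set ℕ) (m : ℕ) :
    Q m ⊆ ⋃ m' ∈ Finset.range (m + 1), disjPieces Q m' := by
  intro x hx
  have hex : ∃ k, x ∈ Q k := ⟨m, hx⟩
  classical
  have h1 : x ∈ Q (Nat.find hex) := Nat.find_spec hex
  have h2 : x ∈ disjPieces Q (Nat.find hex) := by
    refine ⟨h1, fun hmem => ?_⟩
    simp only [Set.mem_iUnion, Finset.mem_range] at hmem
    obtain ⟨k, hk, hxk⟩ := hmem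
    exact Nat.find_min hex hk hxk
  have h3 : Nat.find hex ≤ m := Nat.find_min' hex hx
  exact Set.mem_biUnion (Finset.mem_range.2 (Nat.lt_succ_of_le h3)) h2

lemma disjPieces_iUnion_subset (Q : ℕ → Set ℕ) (U : Set ℕ) (h : ∀ m, Q m ⊆ U) (m : ℕ) :
    disjPieces Q m ⊆ U := (disjPieces_subset Q m).trans (h m)

/-- If `X` is covered by finitely many pieces each of which is finite or inside `U`,
then `X ⊆* U`. -/
lemma subsetStar_of_pieces {X U : Set ℕ} {s : Finset ℕ} {P : ℕ → Set ℕ}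
    (h : X ⊆ ⋃ m ∈ s, P m) (hU : ∀ m ∈ s, (P m).Finite ∨ P m ⊆ U) : SubsetStar X U := by
  classical
  have hsub : X \ U ⊆ ⋃ m ∈ s.filter (fun m => ¬ P m ⊆ U), P m := by
    intro x hx
    obtain ⟨m, hm, hxm⟩ := Set.mem_iUnion₂.1 (h hx.1)
    by_cases hPU : P m ⊆ U
    · exact absurd (hPU hxm) hx.2
    · exact Set.mem_biUnion (Finset.mem_filter.2 ⟨hm, hPU⟩) hxm
  refine Set.Finite.subset ?_ hsub
  refine Set.Finite.biUnion (Finset.finite_toSet _) fun m hm => ?_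
  rcases hU m (Finset.mem_filter.1 hm).1 with hf | hsubU
  · exact hf
  · exact absurd hsubU (Finset.mem_filter.1 hm).2

end PiecesLemmas
section Terminal

lemma injective_of_pairwise_disjoint {f : ℕ → Set ℕ}
    (h : Pairwise (Function.onFun Disjoint f)) (hne : ∀ i, (f i).Nonempty) :
    Function.Injective f := by
  intro i j hij
  by_contra hne'
  have hd := h hne'
  rw [Function.onFun, hij, disjoint_self] at hd
  exact (hne j).ne_empty hd

lemma subset_compl_of_disjoint {X A : Set ℕ} (h : Disjoint X A) : X ⊆ Aᶜ :=
  fun x hx hxA => Set.disjoint_left.1 h hx hxA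

lemma disjoint_of_subset_compl {X A : Set ℕ} (h : X ⊆ Aᶜ) : Disjoint X A :=
  Set.disjoint_left.2 fun _ hx hxA => h hx hxA

/-- Packaging for a Type 6 contradiction family. -/
lemma t6_package {A : Set ℕ} (E : ℕ → Set ℕ) (hce : ∀ i, CESet (E i))
    (hnc : ∀ i, ¬ ComputableSet (E i)) (hdis : Pairwise (Function.onFun Disjoint E))
    (hGen : Generates A (Set.range E)) :
    ∃ m, m < 8 ∧ ∃ G, Generates A G ∧ GenTypeN m G := by
  refine ⟨6, by norm_num, Set.range E, hGen, ?_⟩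
  exact ⟨E, rfl,
    injective_of_pairwise_disjoint hdis fun i => (infinite_of_not_computable (hnc i)).nonempty,
    fun i => ⟨hce i, hnc i, infinite_of_not_computable (hnc i)⟩, hdis⟩

/-- All-computable machinery : from a countable list of computable sets disjoint from `A`
that generates `𝒟(A)`, produce a generating set of Type ≤ 4. -/
lemma acm {A : Set ℕ} (Y : ℕ → Set ℕ) (hYc : ∀ m, ComputableSet (Y m))
    (hYA : ∀ m, Disjoint (Y m) A) (hGen : Generates A (Set.range Y)) :
    ∃ m, m < 8 ∧ ∃ G, Generates A G ∧ GenTypeN m G := by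
  classical
  set P := disjPieces Y with hP
  set I := {m | (P m).Infinite} with hI'
  have hPsub : ∀ m, P m ⊆ Y m := disjPieces_subset Y
  have hPc : ∀ m, ComputableSet (P m) := disjPieces_computable hYc
  have hPA : ∀ m, Disjoint (P m) A := fun m => (hYA m).mono_left (hPsub m)
  by_cases hI : I.Infinite
  · -- Type 4
    set Rs := fun j => P (Nat.nth (· ∈ I) j) with hRs
    have hRmem : ∀ j, Nat.nth (· ∈ I) j ∈ I := fun j => nth_mem' hI j
    have hRsinf : ∀ j, (Rs j).Infinite := fun j => hRmem j
    have hRsc : ∀ j, ComputableSet (Rs j) := fun j => hPc _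
    have hRsdis : Pairwise (Function.onFun Disjoint Rs) := fun i j hij =>
      disjPieces_disjoint Y fun e => hij (Nat.nth_injective hI e)
    have hRsA : ∀ j, Disjoint (Rs j) A := fun j => hPA _
    have hcovY : ∀ m : ℕ, ∃ F' : Set (Set ℕ), F' ⊆ Set.range Rs ∧ F'.Finite ∧
        SubsetStar (Y m) (⋃₀ F') := by
      intro m
      refine ⟨(fun m' => P m') '' {m' | m' ≤ m ∧ m' ∈ I}, ?_, ?_, ?_⟩
      · rintro X ⟨m', ⟨_, hmI⟩, rfl⟩
        obtain ⟨j, hj⟩ := nth_surj hI hmI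
        exact ⟨j, by simp only [hRs, hj]⟩
      · exact Set.Finite.image _ ((Set.finite_Iic m).subset fun x hx => hx.1)
      · refine subsetStar_of_pieces (disjPieces_cover Y m) fun m' hm' => ?_
        by_cases hmI : m' ∈ I
        · exact Or.inr fun x hx =>
            ⟨P m', ⟨m', ⟨Nat.lt_succ_iff.1 (Finset.mem_range.1 hm'), hmI⟩, rfl⟩, hx⟩
        · exact Or.inl (Set.not_infinite.1 hmI)
    refine ⟨4, by norm_num, Set.range Rs, ?_, ?_⟩
    · refine generates_trans hGen (Set.countable_range _) ?_ ?_ ?_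
      · rintro X ⟨j, rfl⟩; exact (hRsc j).to_ce
      · rintro X ⟨j, rfl⟩; exact hRsA j
      · rintro X ⟨m, rfl⟩; exact hcovY m
    · exact ⟨Rs, rfl,
        injective_of_pairwise_disjoint hRsdis fun j => (hRsinf j).nonempty,
        fun j => ⟨hRsc j, hRsinf j⟩, hRsdis⟩
  · -- I finite : lump
    have hIfin : I.Finite := Set.not_infinite.1 hI
    set K := ⋃ m ∈ hIfin.toFinset, P m with hK
    have hKc : ComputableSet K := computableSet_biUnion _ fun i _ => hPc i
    have hKA : Disjoint K A := by
      rw [Set.disjoint_left]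
      intro x hx hxA
      obtain ⟨m, _, hxm⟩ := Set.mem_iUnion₂.1 hx
      exact Set.disjoint_left.1 (hPA m) hxm hxA
    have hcovK : ∀ m : ℕ, SubsetStar (Y m) K := by
      intro m
      refine subsetStar_of_pieces (disjPieces_cover Y m) fun m' _ => ?_
      by_cases hmI : m' ∈ I
      · exact Or.inr fun x hx => Set.mem_biUnion (hIfin.mem_toFinset.2 hmI) hx
      · exact Or.inl (Set.not_infinite.1 hmI)
    have hGenK : Generates A {K} := by
      refine generates_trans hGen (Set.countable_singleton _) ?_ ?_ ?_
      · rintro X rfl; exact hKc.to_ce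
      · rintro X rfl; exact hKA
      · rintro X ⟨m, rfl⟩
        exact ⟨{K}, le_refl _, Set.finite_singleton _, by rw [Set.sUnion_singleton]; exact hcovK m⟩
    by_cases hKinf : K.Infinite
    · exact ⟨2, by norm_num, {K}, hGenK, ⟨K, rfl, hKc, hKinf⟩⟩
    · -- K finite : Type 1
      have hKfin : K.Finite := Set.not_infinite.1 hKinf
      refine ⟨1, by norm_num, {∅}, ?_, rfl⟩
      refine ⟨Set.countable_singleton _, ?_, ?_, ?_⟩
      · rintro X rfl; exact computableSet_empty.to_ce
      · rintro X rfl; exact Set.disjoint_left.2 fun x hx => absurd hx (Set.notMem_empty x)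
      · intro W hW hWA
        obtain ⟨F, hFsub, hFfin, hWF⟩ := hGenK.2.2.2 W hW hWA
        refine ⟨∅, Set.empty_subset _, Set.finite_empty, ?_⟩
        have hWfin : W.Finite := by
          have : ⋃₀ F ⊆ K := Set.sUnion_subset fun X hX => by rw [hFsub hX]
          have hWK : SubsetStar W K := hWF.mono_right this
          have := hWK.union hKfin
          refine this.subset fun x hx => ?_
          by_cases hk : x ∈ K
          · exact Or.inr hk
          · exact Or.inl ⟨hx, hk⟩
        rw [Set.sUnion_empty]
        exact hWfin.subset Set.diff_subset
/-- Noncomputable-core machinery : a single robustly noncomputable c.e. core `V` plus a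
countable list of computable sets, together generating `𝒟(A)`, yield a generating set of
Type 7, 5 or 3. -/
lemma ncm {A : Set ℕ} (V : Set ℕ) (Y : ℕ → Set ℕ) (hVce : CESet V) (hVA : Disjoint V A)
    (hVrob : ∀ C : Set ℕ, ComputableSet C → Disjoint C A → ¬ ComputableSet (V \ C))
    (hYc : ∀ m, ComputableSet (Y m)) (hYA : ∀ m, Disjoint (Y m) A)
    (hGen : Generates A (insert V (Set.range Y))) :
    ∃ m, m < 8 ∧ ∃ G, Generates A G ∧ GenTypeN m G := by
  classical
  have hVnc : ¬ ComputableSet V := by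
    have := hVrob ∅ computableSet_empty (Set.disjoint_left.2 fun x hx => absurd hx (Set.notMem_empty x))
    rwa [Set.diff_empty] at this
  set P := disjPieces Y with hP
  set I := {m | (P m).Infinite} with hI'
  have hPsub : ∀ m, P m ⊆ Y m := disjPieces_subset Y
  have hPc : ∀ m, ComputableSet (P m) := disjPieces_computable hYc
  have hPA : ∀ m, Disjoint (P m) A := fun m => (hYA m).mono_left (hPsub m)
  by_cases hI : I.Infinite
  · set Rs := fun j => P (Nat.nth (· ∈ I) j) with hRs
    have hRmem : ∀ j, Nat.nth (· ∈ I) j ∈ I := fun j => nth_mem' hI j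
    have hRsinf : ∀ j, (Rs j).Infinite := fun j => hRmem j
    have hRsc : ∀ j, ComputableSet (Rs j) := fun j => hPc _
    have hRsdis : Pairwise (Function.onFun Disjoint Rs) := fun i j hij =>
      disjPieces_disjoint Y fun e => hij (Nat.nth_injective hI e)
    have hRsA : ∀ j, Disjoint (Rs j) A := fun j => hPA _
    have hRsinj : Function.Injective Rs :=
      injective_of_pairwise_disjoint hRsdis fun j => (hRsinf j).nonempty
    have hcovY : ∀ (U : Set (Set ℕ)), Set.range Rs ⊆ U → ∀ m : ℕ,
        ∃ F' : Set (Set ℕ), F' ⊆ U ∧ F'.Finite ∧ SubsetStar (Y m) (⋃₀ F') := by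
      intro U hU m
      refine ⟨(fun m' => P m') '' {m' | m' ≤ m ∧ m' ∈ I}, ?_, ?_, ?_⟩
      · rintro X ⟨m', ⟨_, hmI⟩, rfl⟩
        obtain ⟨j, hj⟩ := nth_surj hI hmI
        exact hU ⟨j, by simp only [hRs, hj]⟩
      · exact Set.Finite.image _ ((Set.finite_Iic m).subset fun x hx => hx.1)
      · refine subsetStar_of_pieces (disjPieces_cover Y m) fun m' hm' => ?_
        by_cases hmI : m' ∈ I
        · exact Or.inr fun x hx =>
            ⟨P m', ⟨m', ⟨Nat.lt_succ_iff.1 (Finset.mem_range.1 hm'), hmI⟩, rfl⟩, hx⟩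
        · exact Or.inl (Set.not_infinite.1 hmI)
    by_cases hJ : {j | (V ∩ Rs j).Nonempty}.Infinite
    · -- Type 7
      refine ⟨7, by norm_num, insert V (Set.range Rs), ?_, ?_⟩
      · refine generates_trans hGen ((Set.countable_range _).insert _) ?_ ?_ ?_
        · rintro X (rfl | ⟨j, rfl⟩)
          · exact hVce
          · exact (hRsc j).to_ce
        · rintro X (rfl | ⟨j, rfl⟩)
          · exact hVA
          · exact hRsA j
        · rintro X (rfl | ⟨m, rfl⟩)
          · exact ⟨{X}, by intro Z hZ; rw [hZ]; exact Set.mem_insert _ _,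
              Set.finite_singleton _, by
                rw [Set.sUnion_singleton]; exact subsetStar_of_subset (subset_refl _)⟩
          · exact hcovY _ (Set.subset_insert _ _) m
      · exact ⟨V, Rs, rfl, hVce, hVnc, hRsinj, fun i => fun h => hVnc (h ▸ hRsc i),
          fun j => ⟨hRsc j, hRsinf j⟩, hRsdis, hJ⟩
    · -- Type 5
      have hJfin : {j | (V ∩ Rs j).Nonempty}.Finite := Set.not_infinite.1 hJ
      set C0 := ⋃ j ∈ hJfin.toFinset, Rs j with hC0
      have hC0c : ComputableSet C0 := computableSet_biUnion _ fun i _ => hRsc i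
      have hC0A : Disjoint C0 A := by
        rw [Set.disjoint_left]
        intro x hx hxA
        obtain ⟨j, _, hxj⟩ := Set.mem_iUnion₂.1 hx
        exact Set.disjoint_left.1 (hRsA j) hxj hxA
      set D0 := V \ C0 with hD0
      have hD0ce : CESet D0 := hVce.diff hC0c
      have hD0nc : ¬ ComputableSet D0 := hVrob C0 hC0c hC0A
      have hD0A : Disjoint D0 A := hVA.mono_left Set.diff_subset
      have hD0dis : ∀ i, Disjoint D0 (Rs i) := by
        intro i
        rw [Set.disjoint_left]
        intro x hx hxi
        by_cases hiJ : (V ∩ Rs i).Nonempty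
        · exact hx.2 (Set.mem_biUnion (hJfin.mem_toFinset.2 hiJ) hxi)
        · exact hiJ ⟨x, hx.1, hxi⟩
      refine ⟨5, by norm_num, insert D0 (Set.range Rs), ?_, ?_⟩
      · refine generates_trans hGen ((Set.countable_range _).insert _) ?_ ?_ ?_
        · rintro X (rfl | ⟨j, rfl⟩)
          · exact hD0ce
          · exact (hRsc j).to_ce
        · rintro X (rfl | ⟨j, rfl⟩)
          · exact hD0A
          · exact hRsA j
        · rintro X (rfl | ⟨m, rfl⟩)
          · refine ⟨insert D0 ((fun j => Rs j) '' (hJfin.toFinset : Set ℕ)), ?_, ?_, ?_⟩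
            · rintro Z (rfl | ⟨j, _, rfl⟩)
              · exact Set.mem_insert _ _
              · exact Set.mem_insert_of_mem _ ⟨j, rfl⟩
            · exact (Set.Finite.image _ (hJfin.toFinset.finite_toSet)).insert _
            · refine subsetStar_of_subset fun x hx => ?_
              by_cases hxC : x ∈ C0
              · obtain ⟨j, hjm, hxj⟩ := Set.mem_iUnion₂.1 hxC
                exact ⟨Rs j, Set.mem_insert_of_mem _ ⟨j, hjm, rfl⟩, hxj⟩
              · exact ⟨D0, Set.mem_insert _ _, hx, hxC⟩
          · exact hcovY _ (Set.subset_insert _ _) m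
      · refine ⟨D0, Rs, rfl, hD0ce, hD0nc, infinite_of_not_computable hD0nc, hRsinj,
          fun i h => hD0nc (h ▸ hRsc i), fun j => ⟨hRsc j, hRsinf j⟩, hRsdis, hD0dis⟩
  · -- I finite : Type 3 with V ∪ K
    have hIfin : I.Finite := Set.not_infinite.1 hI
    set K := ⋃ m ∈ hIfin.toFinset, P m with hK
    have hKc : ComputableSet K := computableSet_biUnion _ fun i _ => hPc i
    have hKA : Disjoint K A := by
      rw [Set.disjoint_left]
      intro x hx hxA
      obtain ⟨m, _, hxm⟩ := Set.mem_iUnion₂.1 hx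
      exact Set.disjoint_left.1 (hPA m) hxm hxA
    have hcovK : ∀ m : ℕ, SubsetStar (Y m) K := by
      intro m
      refine subsetStar_of_pieces (disjPieces_cover Y m) fun m' _ => ?_
      by_cases hmI : m' ∈ I
      · exact Or.inr fun x hx => Set.mem_biUnion (hIfin.mem_toFinset.2 hmI) hx
      · exact Or.inl (Set.not_infinite.1 hmI)
    set W0 := V ∪ K with hW0
    have hW0ce : CESet W0 := hVce.union hKc.to_ce
    have hW0nc : ¬ ComputableSet W0 := by
      intro hcomp
      have h1 : ComputableSet (W0 \ K) := hcomp.diff hKc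
      have h2 : W0 \ K = V \ K := by
        rw [hW0, Set.union_diff_right]
      rw [h2] at h1
      exact hVrob K hKc hKA h1
    have hGenW : Generates A {W0} := by
      refine generates_trans hGen (Set.countable_singleton _) ?_ ?_ ?_
      · rintro X rfl; exact hW0ce
      · rintro X rfl; exact Set.disjoint_left.2 fun x hx hxA => by
          rcases hx with h | h
          · exact Set.disjoint_left.1 hVA h hxA
          · exact Set.disjoint_left.1 hKA h hxA
      · rintro X (rfl | ⟨m, rfl⟩)
        · exact ⟨{W0}, le_refl _, Set.finite_singleton _, by
            rw [Set.sUnion_singleton]; exact subsetStar_of_subset (Set.subset_union_left)⟩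
        · exact ⟨{W0}, le_refl _, Set.finite_singleton _, by
            rw [Set.sUnion_singleton]
            exact (hcovK m).mono_right Set.subset_union_right⟩
    exact ⟨3, by norm_num, {W0}, hGenW,
      ⟨W0, rfl, hW0ce, hW0nc, infinite_of_not_computable hW0nc⟩⟩
section MainSteps

/-- The set of indices where `D0 i` is robustly noncomputable. -/
def RobustAt (A : Set ℕ) (D : Set ℕ) : Prop :=
  ∀ C : Set ℕ, ComputableSet C → Disjoint C A → ¬ ComputableSet (D \ C)

lemma robust_not_computable {A D : Set ℕ} (h : RobustAt A D) : ¬ ComputableSet D := by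
  have := h ∅ computableSet_empty
    (Set.disjoint_left.2 fun x hx => absurd hx (Set.notMem_empty x))
  rwa [Set.diff_empty] at this

/-- A finite disjoint union of robust pieces is robust. -/
lemma robust_biUnion {A : Set ℕ} {D : ℕ → Set ℕ} (hDdis : Pairwise (Function.onFun Disjoint D))
    (hDce : ∀ i, CESet (D i)) (s : Finset ℕ) (hs : s.Nonempty)
    (hrob : ∀ i ∈ s, RobustAt A (D i)) : RobustAt A (⋃ i ∈ s, D i) := by
  classical
  intro C hCc hCA hcomp
  obtain ⟨i₀, hi₀⟩ := hs
  have hun : (D i₀ \ C) ∪ (⋃ i ∈ s.erase i₀, (D i \ C)) = (⋃ i ∈ s, D i) \ C := by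
    ext x
    simp only [Set.mem_union, Set.mem_diff, Set.mem_iUnion, exists_prop, Finset.mem_erase]
    constructor
    · rintro (⟨h1, h2⟩ | ⟨i, ⟨_, hi⟩, h1, h2⟩)
      · exact ⟨⟨i₀, hi₀, h1⟩, h2⟩
      · exact ⟨⟨i, hi, h1⟩, h2⟩
    · rintro ⟨⟨i, hi, h1⟩, h2⟩
      by_cases he : i = i₀
      · exact Or.inl ⟨he ▸ h1, h2⟩
      · exact Or.inr ⟨i, ⟨he, hi⟩, h1, h2⟩
  have hdisj : Disjoint (D i₀ \ C) (⋃ i ∈ s.erase i₀, (D i \ C)) := by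
    rw [Set.disjoint_left]
    intro x hx hx'
    obtain ⟨i, hi, hxi⟩ := Set.mem_iUnion₂.1 hx'
    exact Set.disjoint_left.1 (hDdis (Finset.ne_of_mem_erase hi).symm) hx.1 hxi.1
  have hXc : ComputableSet (D i₀ \ C) :=
    computable_piece hcomp ((hDce i₀).diff hCc)
      (ceSet_biUnion _ fun i _ => (hDce i).diff hCc) hdisj hun
  exact hrob i₀ hi₀ C hCc hCA hXc

/-- Step 1: in a Type-8 situation the set of robust indices is infinite. -/
lemma robust_indices_infinite {A : Set ℕ}
    (hno : ∀ m, m < 8 → ¬ ∃ G, Generates A G ∧ GenTypeN m G)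
    (D0 R0 : ℕ → Set ℕ) (hfam : Type8Family D0 R0)
    (hgen : Generates A (Set.range D0 ∪ Set.range R0)) :
    {i | RobustAt A (D0 i)}.Infinite := by
  classical
  obtain ⟨hDinj, hRinj, hDRne, hDprop, hDdis, hRprop, hRdis⟩ := hfam
  have hDA : ∀ i, Disjoint (D0 i) A := fun i => hgen.2.2.1 _ (Or.inl ⟨i, rfl⟩)
  have hRA : ∀ j, Disjoint (R0 j) A := fun j => hgen.2.2.1 _ (Or.inr ⟨j, rfl⟩)
  set Sset := {i | RobustAt A (D0 i)} with hSset
  by_contra hSinf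
  have hSfin : Sset.Finite := Set.not_infinite.1 hSinf
  -- covers for non-robust indices
  have hCT : ∀ i, ∃ C T : Set ℕ, ComputableSet C ∧ ComputableSet T ∧ Disjoint C A ∧
      Disjoint T A ∧ (i ∉ Sset → D0 i ⊆ C ∪ T) := by
    intro i
    by_cases hi : i ∈ Sset
    · exact ⟨∅, ∅, computableSet_empty, computableSet_empty,
        Set.disjoint_left.2 fun x hx => absurd hx (Set.notMem_empty x),
        Set.disjoint_left.2 fun x hx => absurd hx (Set.notMem_empty x),
        fun h => absurd hi h⟩
    · have hi' : ¬ RobustAt A (D0 i) := hi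
      rw [RobustAt] at hi'
      push_neg at hi'
      obtain ⟨C, hCc, hCA, hcomp⟩ := hi'
      exact ⟨C, D0 i \ C, hCc, hcomp, hCA, (hDA i).mono_left Set.diff_subset,
        fun _ x hx => (em (x ∈ C)).imp id fun h => ⟨hx, h⟩⟩
  choose Cf Tf hCc hTc hCA hTA hCTcov using hCT
  -- the interleaved computable list
  set Q : ℕ → Set ℕ := fun m =>
    if m % 3 = 0 then R0 (m / 3) else if m % 3 = 1 then Cf (m / 3) else Tf (m / 3) with hQ
  have hQc : ∀ m, ComputableSet (Q m) := by
    intro m; rw [hQ]; dsimp only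
    split_ifs with h1 h2
    · exact (hRprop _).1
    · exact hCc _
    · exact hTc _
  have hQA : ∀ m, Disjoint (Q m) A := by
    intro m; rw [hQ]; dsimp only
    split_ifs with h1 h2
    · exact hRA _
    · exact hCA _
    · exact hTA _
  have hQR : ∀ j, Q (3 * j) = R0 j := by
    intro j
    have e1 : (3 * j) % 3 = 0 := by omega
    have e2 : (3 * j) / 3 = j := by omega
    rw [hQ]; dsimp only; rw [if_pos e1, e2]
  have hQCf : ∀ i, Q (3 * i + 1) = Cf i := by
    intro i
    have e1 : (3 * i + 1) % 3 = 1 := by omega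
    have e2 : (3 * i + 1) / 3 = i := by omega
    rw [hQ]; dsimp only; rw [if_neg (by omega), if_pos e1, e2]
  have hQTf : ∀ i, Q (3 * i + 2) = Tf i := by
    intro i
    have e1 : (3 * i + 2) % 3 = 2 := by omega
    have e2 : (3 * i + 2) / 3 = i := by omega
    rw [hQ]; dsimp only; rw [if_neg (by omega), if_neg (by omega), e2]
  by_cases hS : Sset = ∅
  · -- no robust indices at all : the Y-list generates, apply acm
    have hGenQ : Generates A (Set.range Q) := by
      refine generates_trans hgen (Set.countable_range _) ?_ ?_ ?_
      · rintro X ⟨m, rfl⟩; exact (hQc m).to_ce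
      · rintro X ⟨m, rfl⟩; exact hQA m
      · rintro X (⟨i, rfl⟩ | ⟨j, rfl⟩)
        · have hiS : i ∉ Sset := by rw [hS]; exact Set.notMem_empty i
          refine ⟨{Q (3 * i + 1), Q (3 * i + 2)}, ?_, ?_, ?_⟩
          · rintro Z (rfl | rfl)
            · exact ⟨3 * i + 1, rfl⟩
            · exact ⟨3 * i + 2, rfl⟩
          · exact (Set.finite_singleton _).insert _
          · rw [Set.sUnion_pair, hQCf, hQTf]
            exact subsetStar_of_subset (hCTcov i hiS)
        · refine ⟨{Q (3 * j)}, ?_, Set.finite_singleton _, ?_⟩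
          · rintro Z rfl; exact ⟨3 * j, rfl⟩
          · rw [Set.sUnion_singleton, hQR]
            exact subsetStar_of_subset (subset_refl _)
    obtain ⟨m, hm, G, hG⟩ := acm Q hQc hQA hGenQ
    exact hno m hm ⟨G, hG⟩
  · -- robust core V
    have hS₀ne : hSfin.toFinset.Nonempty := by
      rw [Set.Finite.toFinset_nonempty]
      exact Set.nonempty_iff_ne_empty.2 hS
    set V := ⋃ i ∈ hSfin.toFinset, D0 i with hV
    have hVce : CESet V := ceSet_biUnion _ fun i _ => (hDprop i).1
    have hVA : Disjoint V A := by
      rw [Set.disjoint_left]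
      intro x hx hxA
      obtain ⟨i, _, hxi⟩ := Set.mem_iUnion₂.1 hx
      exact Set.disjoint_left.1 (hDA i) hxi hxA
    have hVrob : RobustAt A V :=
      robust_biUnion hDdis (fun i => (hDprop i).1) _ hS₀ne
        fun i hi => hSfin.mem_toFinset.1 hi
    have hGenV : Generates A (insert V (Set.range Q)) := by
      refine generates_trans hgen ((Set.countable_range _).insert _) ?_ ?_ ?_
      · rintro X (rfl | ⟨m, rfl⟩)
        · exact hVce
        · exact (hQc m).to_ce
      · rintro X (rfl | ⟨m, rfl⟩)
        · exact hVA
        · exact hQA m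
      · rintro X (⟨i, rfl⟩ | ⟨j, rfl⟩)
        · by_cases hiS : i ∈ Sset
          · refine ⟨{V}, ?_, Set.finite_singleton _, ?_⟩
            · rintro Z rfl; exact Set.mem_insert _ _
            · rw [Set.sUnion_singleton]
              exact subsetStar_of_subset fun x hx =>
                Set.mem_biUnion (hSfin.mem_toFinset.2 hiS) hx
          · refine ⟨{Q (3 * i + 1), Q (3 * i + 2)}, ?_, ?_, ?_⟩
            · rintro Z (rfl | rfl)
              · exact Set.mem_insert_of_mem _ ⟨3 * i + 1, rfl⟩
              · exact Set.mem_insert_of_mem _ ⟨3 * i + 2, rfl⟩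
            · exact (Set.finite_singleton _).insert _
            · rw [Set.sUnion_pair, hQCf, hQTf]
              exact subsetStar_of_subset (hCTcov i hiS)
        · refine ⟨{Q (3 * j)}, ?_, Set.finite_singleton _, ?_⟩
          · rintro Z rfl; exact Set.mem_insert_of_mem _ ⟨3 * j, rfl⟩
          · rw [Set.sUnion_singleton, hQR]
            exact subsetStar_of_subset (subset_refl _)
    obtain ⟨m, hm, G, hG⟩ := ncm V Q hVce hVA hVrob hQc hQA hGenV
    exact hno m hm ⟨G, hG⟩

end MainSteps
section Preprocess

lemma build_Q {A : Set ℕ} (D0 R0 : ℕ → Set ℕ) (hDA : ∀ i, Disjoint (D0 i) A)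
    (hRA : ∀ j, Disjoint (R0 j) A) (hRc : ∀ j, ComputableSet (R0 j)) :
    ∃ Q : ℕ → Set ℕ, (∀ m, ComputableSet (Q m)) ∧ (∀ m, Disjoint (Q m) A) ∧
      (∀ j, Q (3 * j) = R0 j) ∧
      (∀ i, ¬ RobustAt A (D0 i) → D0 i ⊆ Q (3 * i + 1) ∪ Q (3 * i + 2)) := by
  classical
  have hCT : ∀ i, ∃ C T : Set ℕ, ComputableSet C ∧ ComputableSet T ∧ Disjoint C A ∧
      Disjoint T A ∧ (¬ RobustAt A (D0 i) → D0 i ⊆ C ∪ T) := by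
    intro i
    by_cases hi : RobustAt A (D0 i)
    · exact ⟨∅, ∅, computableSet_empty, computableSet_empty,
        Set.disjoint_left.2 fun x hx => absurd hx (Set.notMem_empty x),
        Set.disjoint_left.2 fun x hx => absurd hx (Set.notMem_empty x),
        fun h => absurd hi h⟩
    · have hi' := hi
      rw [RobustAt] at hi'
      push_neg at hi'
      obtain ⟨C, hCc, hCA, hcomp⟩ := hi'
      exact ⟨C, D0 i \ C, hCc, hcomp, hCA, (hDA i).mono_left Set.diff_subset,
        fun _ x hx => (em (x ∈ C)).imp id fun h => ⟨hx, h⟩⟩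
  choose Cf Tf hCc hTc hCA hTA hCTcov using hCT
  refine ⟨fun m => if m % 3 = 0 then R0 (m / 3) else if m % 3 = 1 then Cf (m / 3)
    else Tf (m / 3), ?_, ?_, ?_, ?_⟩
  · intro m; dsimp only
    split_ifs
    · exact hRc _
    · exact hCc _
    · exact hTc _
  · intro m; dsimp only
    split_ifs
    · exact hRA _
    · exact hCA _
    · exact hTA _
  · intro j
    have e1 : (3 * j) % 3 = 0 := by omega
    have e2 : (3 * j) / 3 = j := by omega
    dsimp only; rw [if_pos e1, e2]
  · intro i hi
    have e1 : (3 * i + 1) % 3 = 1 := by omega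
    have e2 : (3 * i + 1) / 3 = i := by omega
    have e3 : (3 * i + 2) % 3 = 2 := by omega
    have e4 : (3 * i + 2) / 3 = i := by omega
    dsimp only
    rw [if_neg (by omega), if_pos e1, e2, if_neg (by omega), if_neg (by omega), e4]
    exact hCTcov i hi

/-- Step 2: we can pass to a generating family where all the noncomputable parts are
robust and the computable parts partition `Aᶜ`. -/
lemma preprocess {A : Set ℕ}
    (hno : ∀ m, m < 8 → ¬ ∃ G, Generates A G ∧ GenTypeN m G)
    (D0 R0 : ℕ → Set ℕ) (hfam : Type8Family D0 R0)
    (hgen : Generates A (Set.range D0 ∪ Set.range R0)) :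
    ∃ D1 R1 : ℕ → Set ℕ,
      (∀ n, CESet (D1 n)) ∧ (∀ n, RobustAt A (D1 n)) ∧
      Pairwise (Function.onFun Disjoint D1) ∧ (∀ n, Disjoint (D1 n) A) ∧
      (∀ j, ComputableSet (R1 j)) ∧ (∀ j, (R1 j).Infinite) ∧
      Pairwise (Function.onFun Disjoint R1) ∧ (⋃ j, R1 j) = Aᶜ ∧
      Generates A (Set.range D1 ∪ Set.range R1) := by
  classical
  have hSinf : {i | RobustAt A (D0 i)}.Infinite :=
    robust_indices_infinite hno D0 R0 hfam hgen
  obtain ⟨hDinj, hRinj, hDRne, hDprop, hDdis, hRprop, hRdis⟩ := hfam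
  have hDA : ∀ i, Disjoint (D0 i) A := fun i => hgen.2.2.1 _ (Or.inl ⟨i, rfl⟩)
  have hRA : ∀ j, Disjoint (R0 j) A := fun j => hgen.2.2.1 _ (Or.inr ⟨j, rfl⟩)
  obtain ⟨Q, hQc, hQA, hQR, hQcov⟩ := build_Q D0 R0 hDA hRA fun j => (hRprop j).1
  set s : ℕ → ℕ := Nat.nth (· ∈ {i | RobustAt A (D0 i)}) with hs
  have hsmem : ∀ n, RobustAt A (D0 (s n)) := fun n => nth_mem' hSinf n
  have hsinj : Function.Injective s := Nat.nth_injective hSinf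
  set D1 : ℕ → Set ℕ := fun n => D0 (s n) with hD1
  have hD1ce : ∀ n, CESet (D1 n) := fun n => (hDprop _).1
  have hD1rob : ∀ n, RobustAt A (D1 n) := hsmem
  have hD1dis : Pairwise (Function.onFun Disjoint D1) := fun i j hij =>
    hDdis fun e => hij (hsinj e)
  have hD1A : ∀ n, Disjoint (D1 n) A := fun n => hDA _
  set P := disjPieces Q with hP
  set I := {m | (P m).Infinite} with hI'
  have hPsub : ∀ m, P m ⊆ Q m := disjPieces_subset Q
  have hPc : ∀ m, ComputableSet (P m) := disjPieces_computable hQc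
  have hPA : ∀ m, Disjoint (P m) A := fun m => (hQA m).mono_left (hPsub m)
  -- infinitely many infinite pieces, else Type 6
  have hIinf : I.Infinite := by
    by_contra hIinf
    have hIfin : I.Finite := Set.not_infinite.1 hIinf
    set K := ⋃ m ∈ hIfin.toFinset, P m with hK
    have hKc : ComputableSet K := computableSet_biUnion _ fun i _ => hPc i
    have hKA : Disjoint K A := by
      rw [Set.disjoint_left]
      intro x hx hxA
      obtain ⟨m, _, hxm⟩ := Set.mem_iUnion₂.1 hx
      exact Set.disjoint_left.1 (hPA m) hxm hxA
    have hQK : ∀ m : ℕ, SubsetStar (Q m) K := by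
      intro m
      refine subsetStar_of_pieces (disjPieces_cover Q m) fun m' _ => ?_
      by_cases hmI : m' ∈ I
      · exact Or.inr fun x hx => Set.mem_biUnion (hIfin.mem_toFinset.2 hmI) hx
      · exact Or.inl (Set.not_infinite.1 hmI)
    set E : ℕ → Set ℕ := fun n => Nat.casesOn n (D1 0 ∪ K) (fun n' => D1 (n' + 1) \ K)
      with hE
    have hEce : ∀ n, CESet (E n) := by
      intro n; cases n with
      | zero => exact (hD1ce 0).union hKc.to_ce
      | succ n' => exact (hD1ce (n' + 1)).diff hKc
    have hEnc : ∀ n, ¬ ComputableSet (E n) := by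
      intro n; cases n with
      | zero =>
        intro hcomp
        have h1 : ComputableSet ((D1 0 ∪ K) \ K) := hcomp.diff hKc
        rw [Set.union_diff_right] at h1
        exact hD1rob 0 K hKc hKA h1
      | succ n' => exact hD1rob (n' + 1) K hKc hKA
    have hsubE : ∀ n, D1 n ⊆ E n ∪ E 0 := by
      intro n; cases n with
      | zero => intro x hx; exact Or.inl (Or.inl hx)
      | succ n' =>
        intro x hx
        by_cases hk : x ∈ K
        · exact Or.inr (Or.inr hk)
        · exact Or.inl ⟨hx, hk⟩
    have hEdis : Pairwise (Function.onFun Disjoint E) := by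
      have key : ∀ n m, n ≠ m → ∀ x, x ∈ E n → x ∈ E m → False := by
        intro n m hnm x hxn hxm
        cases n with
        | zero =>
          cases m with
          | zero => exact hnm rfl
          | succ m' =>
            rcases hxn with h | h
            · exact Set.disjoint_left.1 (hD1dis (Nat.succ_ne_zero m').symm) h hxm.1
            · exact hxm.2 h
        | succ n' =>
          cases m with
          | zero =>
            rcases hxm with h | h
            · exact Set.disjoint_left.1 (hD1dis (Nat.succ_ne_zero n')) hxn.1 h
            · exact hxn.2 h
          | succ m' =>
            exact Set.disjoint_left.1 (hD1dis hnm) hxn.1 hxm.1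
      exact fun n m hnm => Set.disjoint_left.2 fun x hx hx' => key n m hnm x hx hx'
    have hEA : ∀ n, Disjoint (E n) A := by
      intro n
      cases n with
      | zero =>
        rw [Set.disjoint_left]
        intro x hx hxA
        rcases hx with h | h
        · exact Set.disjoint_left.1 (hD1A 0) h hxA
        · exact Set.disjoint_left.1 hKA h hxA
      | succ n' => exact (hD1A (n' + 1)).mono_left Set.diff_subset
    have hGenE : Generates A (Set.range E) := by
      refine generates_trans hgen (Set.countable_range _) ?_ ?_ ?_
      · rintro X ⟨n, rfl⟩; exact hEce n
      · rintro X ⟨n, rfl⟩; exact hEA n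
      · rintro X (⟨i, rfl⟩ | ⟨j, rfl⟩)
        · by_cases hiS : RobustAt A (D0 i)
          · obtain ⟨n, hn⟩ := nth_surj hSinf (show i ∈ {i | RobustAt A (D0 i)} from hiS)
            refine ⟨{E n, E 0}, ?_, (Set.finite_singleton _).insert _, ?_⟩
            · rintro Z (rfl | rfl)
              · exact ⟨n, rfl⟩
              · exact ⟨0, rfl⟩
            · rw [Set.sUnion_pair]
              refine subsetStar_of_subset ?_
              have : D0 i = D1 n := by rw [hD1]; dsimp only; rw [hs, hn]
              rw [this]
              exact hsubE n
          · refine ⟨{E 0}, ?_, Set.finite_singleton _, ?_⟩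
            · rintro Z rfl; exact ⟨0, rfl⟩
            · rw [Set.sUnion_singleton]
              refine (subsetStar_of_subset (hQcov i hiS)).trans ?_
              refine (((hQK (3 * i + 1)).union_left (hQK (3 * i + 2)))).mono_right ?_
              intro x hx; exact Or.inr hx
        · refine ⟨{E 0}, ?_, Set.finite_singleton _, ?_⟩
          · rintro Z rfl; exact ⟨0, rfl⟩
          · rw [Set.sUnion_singleton]
            have : SubsetStar (R0 j) K := by rw [← hQR j]; exact hQK (3 * j)
            exact this.mono_right fun x hx => Or.inr hx
    obtain ⟨m, hm, G, hG⟩ := t6_package E hEce hEnc hEdis hGenE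
    exact absurd ⟨G, hG⟩ (hno m hm)
  -- now assemble R1
  set ι : ℕ → ℕ := Nat.nth (· ∈ I) with hι
  have hιmem : ∀ j, ι j ∈ I := fun j => nth_mem' hIinf j
  have hιinj : Function.Injective ι := Nat.nth_injective hIinf
  set UPI := ⋃ m ∈ I, P m with hUPI
  set Z := Aᶜ \ UPI with hZ
  set R1 : ℕ → Set ℕ := fun j => P (ι j) ∪ absorbPieces Z j with hR1
  have hPAc : ∀ m, P m ⊆ Aᶜ := fun m => subset_compl_of_disjoint (hPA m)
  have hZc : Z ⊆ Aᶜ := Set.diff_subset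
  have hR1c : ∀ j, ComputableSet (R1 j) :=
    fun j => (hPc _).union (computableSet_of_finite (absorbPieces_finite Z j))
  have hR1inf : ∀ j, (R1 j).Infinite :=
    fun j => ((hιmem j : (P (ι j)).Infinite)).mono Set.subset_union_left
  have hR1A : ∀ j, Disjoint (R1 j) A := by
    intro j
    refine disjoint_of_subset_compl ?_
    intro x hx
    rcases hx with h | h
    · exact hPAc _ h
    · exact hZc (absorbPieces_subset Z j h)
  have hR1dis : Pairwise (Function.onFun Disjoint R1) := by
    intro i j hij
    rw [Function.onFun, Set.disjoint_left]
    rintro x (hxP | hxZ) (hyP | hyZ)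
    · exact Set.disjoint_left.1 (disjPieces_disjoint Q fun e => hij (hιinj e)) hxP hyP
    · exact (absorbPieces_subset Z j hyZ).2 (Set.mem_biUnion (hιmem i) hxP)
    · exact (absorbPieces_subset Z i hxZ).2 (Set.mem_biUnion (hιmem j) hyP)
    · exact Set.disjoint_left.1 (absorbPieces_disjoint Z hij) hxZ hyZ
  have hR1Union : (⋃ j, R1 j) = Aᶜ := by
    apply Set.Subset.antisymm
    · refine Set.iUnion_subset fun j => ?_
      intro x hx
      rcases hx with h | h
      · exact hPAc _ h
      · exact hZc (absorbPieces_subset Z j h)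
    · intro x hx
      by_cases hxU : x ∈ UPI
      · obtain ⟨m, hmI, hxm⟩ := Set.mem_iUnion₂.1 hxU
        obtain ⟨j, hj⟩ := nth_surj hIinf hmI
        refine Set.mem_iUnion.2 ⟨j, Or.inl ?_⟩
        rw [show ι j = m from hj]
        exact hxm
      · have hxZ : x ∈ Z := ⟨hx, hxU⟩
        rw [← absorbPieces_iUnion Z] at hxZ
        obtain ⟨j, hj⟩ := Set.mem_iUnion.1 hxZ
        exact Set.mem_iUnion.2 ⟨j, Or.inr hj⟩
  -- coverage of each Q m by finitely many R1's
  have hQcov1 : ∀ m : ℕ, ∃ F' : Set (Set ℕ), F' ⊆ Set.range R1 ∧ F'.Finite ∧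
      SubsetStar (Q m) (⋃₀ F') := by
    intro m
    refine ⟨(fun m' => R1 (Nat.count (· ∈ I) m')) '' {m' | m' ≤ m ∧ m' ∈ I}, ?_, ?_, ?_⟩
    · rintro X ⟨m', _, rfl⟩; exact ⟨_, rfl⟩
    · exact Set.Finite.image _ ((Set.finite_Iic m).subset fun x hx => hx.1)
    · refine subsetStar_of_pieces (disjPieces_cover Q m) fun m' hm' => ?_
      by_cases hmI : m' ∈ I
      · refine Or.inr fun x hx => ?_
        have hc : ι (Nat.count (· ∈ I) m') = m' := by rw [hι]; exact Nat.nth_count hmI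
        exact ⟨R1 (Nat.count (· ∈ I) m'),
          ⟨m', ⟨Nat.lt_succ_iff.1 (Finset.mem_range.1 hm'), hmI⟩, rfl⟩,
          Or.inl (show x ∈ P (ι (Nat.count (· ∈ I) m')) from hc.symm ▸ hx)⟩
      · exact Or.inl (Set.not_infinite.1 hmI)
  have hGen1 : Generates A (Set.range D1 ∪ Set.range R1) := by
    refine generates_trans hgen ((Set.countable_range _).union (Set.countable_range _)) ?_ ?_ ?_
    · rintro X (⟨n, rfl⟩ | ⟨j, rfl⟩)
      · exact hD1ce n
      · exact (hR1c j).to_ce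
    · rintro X (⟨n, rfl⟩ | ⟨j, rfl⟩)
      · exact hD1A n
      · exact hR1A j
    · rintro X (⟨i, rfl⟩ | ⟨j, rfl⟩)
      · by_cases hiS : RobustAt A (D0 i)
        · obtain ⟨n, hn⟩ := nth_surj hSinf (show i ∈ {i | RobustAt A (D0 i)} from hiS)
          refine ⟨{D1 n}, ?_, Set.finite_singleton _, ?_⟩
          · rintro Z' rfl; exact Or.inl ⟨n, rfl⟩
          · rw [Set.sUnion_singleton]
            refine subsetStar_of_subset ?_
            have : D0 i = D1 n := by rw [hD1]; dsimp only; rw [hs, hn]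
            rw [this]
        · obtain ⟨F1, hF1sub, hF1fin, hF1⟩ := hQcov1 (3 * i + 1)
          obtain ⟨F2, hF2sub, hF2fin, hF2⟩ := hQcov1 (3 * i + 2)
          refine ⟨F1 ∪ F2, ?_, hF1fin.union hF2fin, ?_⟩
          · exact Set.union_subset (hF1sub.trans Set.subset_union_right)
              (hF2sub.trans Set.subset_union_right)
          · refine (subsetStar_of_subset (hQcov i hiS)).trans ?_
            rw [Set.sUnion_union]
            exact (hF1.mono_right Set.subset_union_left).union_left
              (hF2.mono_right Set.subset_union_right)
      · obtain ⟨F1, hF1sub, hF1fin, hF1⟩ := hQcov1 (3 * j)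
        refine ⟨F1, hF1sub.trans Set.subset_union_right, hF1fin, ?_⟩
        rw [← hQR j]
        exact hF1
  exact ⟨D1, R1, hD1ce, hD1rob, hD1dis, hD1A, hR1c, hR1inf, hR1dis, hR1Union, hGen1⟩

end Preprocess
section KeyClaim

/-- Step 3 (key claim): each computable member keeps infinitely many "survivors" with
respect to any finite union of the robust noncomputable members. -/
lemma key_claim {A : Set ℕ} (hno : ∀ m, m < 8 → ¬ ∃ G, Generates A G ∧ GenTypeN m G)
    (D1 R1 : ℕ → Set ℕ) (hD1ce : ∀ n, CESet (D1 n)) (hD1rob : ∀ n, RobustAt A (D1 n))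
    (hD1dis : Pairwise (Function.onFun Disjoint D1)) (hD1A : ∀ n, Disjoint (D1 n) A)
    (hR1c : ∀ j, ComputableSet (R1 j)) (hR1inf : ∀ j, (R1 j).Infinite)
    (hR1A : ∀ j, Disjoint (R1 j) A)
    (hGen1 : Generates A (Set.range D1 ∪ Set.range R1)) :
    ∀ F : Finset ℕ, {k | (R1 k \ ⋃ n ∈ F, D1 n).Infinite}.Infinite := by
  classical
  intro F
  rcases F.eq_empty_or_nonempty with rfl | ⟨n₀, hn₀⟩
  · refine Set.infinite_univ.mono fun k _ => ?_
    have : (⋃ n ∈ (∅ : Finset ℕ), D1 n) = (∅ : Set ℕ) := by simp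
    show (R1 k \ ⋃ n ∈ (∅ : Finset ℕ), D1 n).Infinite
    rw [this, Set.diff_empty]
    exact hR1inf k
  · by_contra hfin'
    set U := ⋃ n ∈ F, D1 n with hU
    have hGOODfin : {k | (R1 k \ U).Infinite}.Finite := Set.not_infinite.1 hfin'
    set X := ⋃ k ∈ hGOODfin.toFinset, R1 k with hX
    have hXc : ComputableSet X := computableSet_biUnion _ fun i _ => hR1c i
    have hXA : Disjoint X A := by
      rw [Set.disjoint_left]
      intro x hx hxA
      obtain ⟨k, _, hxk⟩ := Set.mem_iUnion₂.1 hx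
      exact Set.disjoint_left.1 (hR1A k) hxk hxA
    have hUce : CESet U := ceSet_biUnion _ fun i _ => hD1ce i
    have hUA : Disjoint U A := by
      rw [Set.disjoint_left]
      intro x hx hxA
      obtain ⟨n, _, hxn⟩ := Set.mem_iUnion₂.1 hx
      exact Set.disjoint_left.1 (hD1A n) hxn hxA
    have hUrob : RobustAt A U := robust_biUnion hD1dis hD1ce F ⟨n₀, hn₀⟩ fun i _ => hD1rob i
    have hcompl : {k : ℕ | k ∉ F}.Infinite := by
      refine (F.finite_toSet.infinite_compl).mono fun x hx => ?_
      intro hxF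
      exact hx (Finset.mem_coe.2 hxF)
    set g : ℕ → ℕ := Nat.nth (· ∈ {k : ℕ | k ∉ F}) with hg
    have hgmem : ∀ m, g m ∉ F := fun m => nth_mem' hcompl m
    have hginj : Function.Injective g := Nat.nth_injective hcompl
    set E : ℕ → Set ℕ := fun m => Nat.casesOn m (U ∪ X) (fun m' => D1 (g m') \ X) with hE
    have hEce : ∀ m, CESet (E m) := by
      intro m; cases m with
      | zero => exact hUce.union hXc.to_ce
      | succ m' => exact (hD1ce _).diff hXc
    have hEnc : ∀ m, ¬ ComputableSet (E m) := by
      intro m; cases m with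
      | zero =>
        intro hcomp
        have h1 : ComputableSet ((U ∪ X) \ X) := hcomp.diff hXc
        rw [Set.union_diff_right] at h1
        exact hUrob X hXc hXA h1
      | succ m' => exact hD1rob (g m') X hXc hXA
    have hEdis : Pairwise (Function.onFun Disjoint E) := by
      have key : ∀ n m, n ≠ m → ∀ x, x ∈ E n → x ∈ E m → False := by
        intro n m hnm x hxn hxm
        cases n with
        | zero =>
          cases m with
          | zero => exact hnm rfl
          | succ m' =>
            rcases hxn with h | h
            · obtain ⟨n', hn'F, hxn'⟩ := Set.mem_iUnion₂.1 h
              refine Set.disjoint_left.1 (hD1dis (i := n') (j := g m') ?_) hxn' hxm.1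
              intro e; exact hgmem m' (e ▸ hn'F)
            · exact hxm.2 h
        | succ n' =>
          cases m with
          | zero =>
            rcases hxm with h | h
            · obtain ⟨m'', hm''F, hxm''⟩ := Set.mem_iUnion₂.1 h
              refine Set.disjoint_left.1 (hD1dis (i := g n') (j := m'') ?_) hxn.1 hxm''
              intro e; exact hgmem n' (e.symm ▸ hm''F)
            · exact hxn.2 h
          | succ m' =>
            refine Set.disjoint_left.1 (hD1dis (i := g n') (j := g m') ?_) hxn.1 hxm.1
            intro e
            exact hnm (congrArg Nat.succ (hginj e))
      exact fun n m hnm => Set.disjoint_left.2 fun x hx hx' => key n m hnm x hx hx'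
    have hEA : ∀ m, Disjoint (E m) A := by
      intro m; cases m with
      | zero =>
        rw [Set.disjoint_left]
        intro x hx hxA
        rcases hx with h | h
        · exact Set.disjoint_left.1 hUA h hxA
        · exact Set.disjoint_left.1 hXA h hxA
      | succ m' => exact (hD1A (g m')).mono_left Set.diff_subset
    have hGenE : Generates A (Set.range E) := by
      refine generates_trans hGen1 (Set.countable_range _) ?_ ?_ ?_
      · rintro Y ⟨m, rfl⟩; exact hEce m
      · rintro Y ⟨m, rfl⟩; exact hEA m
      · rintro Y (⟨n, rfl⟩ | ⟨k, rfl⟩)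
        · by_cases hnF : n ∈ F
          · refine ⟨{E 0}, ?_, Set.finite_singleton _, ?_⟩
            · rintro Z rfl; exact ⟨0, rfl⟩
            · rw [Set.sUnion_singleton]
              exact subsetStar_of_subset fun x hx => Or.inl (Set.mem_biUnion hnF hx)
          · obtain ⟨m, hm⟩ := nth_surj hcompl (show n ∈ {k : ℕ | k ∉ F} from hnF)
            refine ⟨{E (m + 1), E 0}, ?_, (Set.finite_singleton _).insert _, ?_⟩
            · rintro Z (rfl | rfl)
              · exact ⟨m + 1, rfl⟩
              · exact ⟨0, rfl⟩
            · rw [Set.sUnion_pair]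
              refine subsetStar_of_subset fun x hx => ?_
              have hgn : g m = n := by rw [hg]; exact hm
              by_cases hxX : x ∈ X
              · exact Or.inr (Or.inr hxX)
              · exact Or.inl ⟨hgn.symm ▸ hx, hxX⟩
        · by_cases hkG : (R1 k \ U).Infinite
          · refine ⟨{E 0}, ?_, Set.finite_singleton _, ?_⟩
            · rintro Z rfl; exact ⟨0, rfl⟩
            · rw [Set.sUnion_singleton]
              exact subsetStar_of_subset fun x hx =>
                Or.inr (Set.mem_biUnion (hGOODfin.mem_toFinset.2 hkG) hx)
          · refine ⟨{E 0}, ?_, Set.finite_singleton _, ?_⟩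
            · rintro Z rfl; exact ⟨0, rfl⟩
            · rw [Set.sUnion_singleton]
              have hfin : (R1 k \ U).Finite := Set.not_infinite.1 hkG
              refine hfin.subset fun x hx => ⟨hx.1, fun hxU => hx.2 (Or.inl hxU)⟩
    obtain ⟨m, hm, G, hG⟩ := t6_package E hEce hEnc hEdis hGenE
    exact absurd ⟨G, hG⟩ (hno m hm)

end KeyClaim
theorem stmt_14 (A : Set ℕ) (hA : CESet A) (h8 : SetOfType A 8) :
    ∃ D R : ℕ → Set ℕ, Type8Family D R ∧
      Generates A (Set.range D ∪ Set.range R) ∧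
      (∀ j i, j < i → D i ∩ R j = ∅) ∧
      (∀ j, (R j \ ⋃ i ≤ j, D i).Infinite) ∧
      (⋃ i, D i) ⊆ (⋃ i, R i) ∧ (⋃ i, R i) = Aᶜ := by
  classical
  obtain ⟨⟨G0, hGen0, ht8⟩, hno⟩ := h8
  obtain ⟨D0, R0, hG0eq, hfam⟩ := (ht8 : IsType8 G0)
  rw [hG0eq] at hGen0
  obtain ⟨D1, R1, hD1ce, hD1rob, hD1dis, hD1A, hR1c, hR1inf, hR1dis, hR1U, hGen1⟩ :=
    preprocess hno D0 R0 hfam hGen0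
  have hR1A : ∀ j, Disjoint (R1 j) A := fun j => hGen1.2.2.1 _ (Or.inr ⟨j, rfl⟩)
  have hkey := key_claim hno D1 R1 hD1ce hD1rob hD1dis hD1A hR1c hR1inf hR1A hGen1
  -- recursive choice of the witnesses kf
  have hex : ∀ (j b : ℕ), ∃ kk, b < kk ∧
      (R1 kk \ ⋃ n ∈ Finset.range (j + 1), D1 n).Infinite := by
    intro j b
    obtain ⟨kk, hkk, hb⟩ := (hkey (Finset.range (j + 1))).exists_gt b
    exact ⟨kk, hb, hkk⟩
  choose f hf1 hf2 using hex
  let kf : ℕ → ℕ := fun j => Nat.rec (motive := fun _ => ℕ) (f 0 0) (fun j' prev => f (j' + 1) prev) j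
  have hkf0eq : kf 0 = f 0 0 := rfl
  have hkfsucc : ∀ j, kf (j + 1) = f (j + 1) (kf j) := fun j => rfl
  have hmono : StrictMono kf := by
    refine strictMono_nat_of_lt_succ fun j => ?_
    rw [hkfsucc]; exact hf1 _ _
  have hkfgood : ∀ j, (R1 (kf j) \ ⋃ n ∈ Finset.range (j + 1), D1 n).Infinite := by
    intro j
    cases j with
    | zero => rw [hkf0eq]; exact hf2 0 0
    | succ j' => rw [hkfsucc]; exact hf2 _ _
  -- the blocks
  let blk : ℕ → Finset ℕ := fun j =>
    Nat.casesOn j (Finset.Iic (kf 0)) (fun j' => Finset.Ioc (kf j') (kf (j' + 1)))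
  have hkfblk : ∀ j, kf j ∈ blk j := by
    intro j
    cases j with
    | zero => exact Finset.mem_Iic.2 le_rfl
    | succ j' => exact Finset.mem_Ioc.2 ⟨hmono (Nat.lt_succ_self j'), le_rfl⟩
  have hblk_le : ∀ j m, m ∈ blk j → m ≤ kf j := by
    intro j m hm
    cases j with
    | zero => exact Finset.mem_Iic.1 hm
    | succ j' => exact (Finset.mem_Ioc.1 hm).2
  have hblk_gt : ∀ j' m, m ∈ blk (j' + 1) → kf j' < m :=
    fun j' m hm => (Finset.mem_Ioc.1 hm).1
  have hblkdis : ∀ i j, i ≠ j → ∀ m, m ∈ blk i → m ∈ blk j → False := by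
    have key : ∀ i j, i < j → ∀ m, m ∈ blk i → m ∈ blk j → False := by
      intro i j hij m hmi hmj
      obtain ⟨j', rfl⟩ := Nat.exists_eq_add_of_lt hij
      have h1 : m ≤ kf i := hblk_le i m hmi
      have h2 : kf (i + j') < m := hblk_gt (i + j') m hmj
      have h3 : kf i ≤ kf (i + j') := hmono.monotone (Nat.le_add_right i j')
      omega
    intro i j hij m hmi hmj
    rcases lt_or_gt_of_ne hij with h | h
    · exact key i j h m hmi hmj
    · exact key j i h m hmj hmi
  have hblkcover : ∀ m, ∃ j, m ∈ blk j := by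
    have aux : ∀ j m, m ≤ kf j → ∃ j', m ∈ blk j' := by
      intro j
      induction j with
      | zero => intro m hm; exact ⟨0, Finset.mem_Iic.2 hm⟩
      | succ j' ih =>
        intro m hm
        rcases le_or_gt m (kf j') with h | h
        · exact ih m h
        · exact ⟨j' + 1, Finset.mem_Ioc.2 ⟨h, hm⟩⟩
    intro m
    exact aux m m hmono.le_apply
  -- the final family
  let Rt : ℕ → Set ℕ := fun j => ⋃ m ∈ blk j, R1 m
  let Dt : ℕ → Set ℕ := fun n => D1 n \ ⋃ j ∈ Finset.range n, Rt j
  have hR1Ac : ∀ m, R1 m ⊆ Aᶜ := fun m => subset_compl_of_disjoint (hR1A m)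
  have hD1Ac : ∀ n, D1 n ⊆ Aᶜ := fun n => subset_compl_of_disjoint (hD1A n)
  have hRtc : ∀ j, ComputableSet (Rt j) :=
    fun j => computableSet_biUnion _ fun m _ => hR1c m
  have hRtsubAc : ∀ j, Rt j ⊆ Aᶜ := by
    intro j x hx
    obtain ⟨m, _, hxm⟩ := Set.mem_iUnion₂.1 hx
    exact hR1Ac m hxm
  have hRtA : ∀ j, Disjoint (Rt j) A := fun j => disjoint_of_subset_compl (hRtsubAc j)
  have hRtinf : ∀ j, (Rt j).Infinite := by
    intro j
    refine (hR1inf (kf j)).mono fun x hx => Set.mem_biUnion (hkfblk j) hx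
  have hRtdis : Pairwise (Function.onFun Disjoint Rt) := by
    intro i j hij
    rw [Function.onFun, Set.disjoint_left]
    intro x hxi hxj
    obtain ⟨m, hmi, hxm⟩ := Set.mem_iUnion₂.1 hxi
    obtain ⟨m', hmj, hxm'⟩ := Set.mem_iUnion₂.1 hxj
    by_cases hmm : m = m'
    · exact hblkdis i j hij m hmi (hmm ▸ hmj)
    · exact Set.disjoint_left.1 (hR1dis hmm) hxm hxm'
  have hsubtc : ∀ n, ComputableSet (⋃ j ∈ Finset.range n, Rt j) :=
    fun n => computableSet_biUnion _ fun j _ => hRtc j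
  have hsubtA : ∀ n, Disjoint (⋃ j ∈ Finset.range n, Rt j) A := by
    intro n
    refine disjoint_of_subset_compl ?_
    intro x hx
    obtain ⟨j, _, hxj⟩ := Set.mem_iUnion₂.1 hx
    exact hRtsubAc j hxj
  have hDtce : ∀ n, CESet (Dt n) := fun n => (hD1ce n).diff (hsubtc n)
  have hDtnc : ∀ n, ¬ ComputableSet (Dt n) :=
    fun n => hD1rob n _ (hsubtc n) (hsubtA n)
  have hDtinf : ∀ n, (Dt n).Infinite := fun n => infinite_of_not_computable (hDtnc n)
  have hDtsub : ∀ n, Dt n ⊆ D1 n := fun n => Set.diff_subset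
  have hDtdis : Pairwise (Function.onFun Disjoint Dt) :=
    fun i j hij => (hD1dis hij).mono (hDtsub i) (hDtsub j)
  have hDtA : ∀ n, Disjoint (Dt n) A := fun n => (hD1A n).mono_left (hDtsub n)
  -- Type 8 family
  have hfam8 : Type8Family Dt Rt := by
    refine ⟨?_, ?_, ?_, ?_, hDtdis, ?_, hRtdis⟩
    · exact injective_of_pairwise_disjoint hDtdis fun n => (hDtinf n).nonempty
    · exact injective_of_pairwise_disjoint hRtdis fun j => (hRtinf j).nonempty
    · intro i j h
      exact hDtnc i (h ▸ hRtc j)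
    · exact fun n => ⟨hDtce n, hDtnc n⟩
    · exact fun j => ⟨hRtc j, hRtinf j⟩
  -- Generates
  have hGenT : Generates A (Set.range Dt ∪ Set.range Rt) := by
    refine generates_trans hGen1 ((Set.countable_range _).union (Set.countable_range _)) ?_ ?_ ?_
    · rintro X (⟨n, rfl⟩ | ⟨j, rfl⟩)
      · exact hDtce n
      · exact (hRtc j).to_ce
    · rintro X (⟨n, rfl⟩ | ⟨j, rfl⟩)
      · exact hDtA n
      · exact hRtA j
    · rintro X (⟨n, rfl⟩ | ⟨m, rfl⟩)
      · refine ⟨insert (Dt n) (Rt '' (Finset.range n : Set ℕ)), ?_, ?_, ?_⟩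
        · rintro Z (rfl | ⟨j, _, rfl⟩)
          · exact Or.inl ⟨n, rfl⟩
          · exact Or.inr ⟨j, rfl⟩
        · exact (Set.Finite.image _ (Finset.range n).finite_toSet).insert _
        · refine subsetStar_of_subset fun x hx => ?_
          by_cases hxR : x ∈ ⋃ j ∈ Finset.range n, Rt j
          · obtain ⟨j, hj, hxj⟩ := Set.mem_iUnion₂.1 hxR
            exact ⟨Rt j, Set.mem_insert_of_mem _ ⟨j, hj, rfl⟩, hxj⟩
          · exact ⟨Dt n, Set.mem_insert _ _, hx, hxR⟩
      · obtain ⟨j, hj⟩ := hblkcover m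
        refine ⟨{Rt j}, ?_, Set.finite_singleton _, ?_⟩
        · rintro Z rfl; exact Or.inr ⟨j, rfl⟩
        · rw [Set.sUnion_singleton]
          exact subsetStar_of_subset fun x hx => Set.mem_biUnion hj hx
  -- conclusions
  refine ⟨Dt, Rt, hfam8, hGenT, ?_, ?_, ?_, ?_⟩
  · intro j i hji
    rw [Set.eq_empty_iff_forall_notMem]
    rintro x ⟨hxD, hxR⟩
    exact hxD.2 (Set.mem_biUnion (Finset.mem_range.2 hji) hxR)
  · intro j
    refine (hkfgood j).mono fun x hx => ?_
    refine ⟨Set.mem_biUnion (hkfblk j) hx.1, ?_⟩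
    intro hxU
    obtain ⟨i, hi⟩ := Set.mem_iUnion.1 hxU
    obtain ⟨hij, hxi⟩ := Set.mem_iUnion.1 hi
    exact hx.2 (Set.mem_biUnion (Finset.mem_range.2 (Nat.lt_succ_of_le hij)) (hDtsub i hxi))
  · intro x hx
    obtain ⟨n, hxn⟩ := Set.mem_iUnion.1 hx
    have hxA : x ∈ Aᶜ := hD1Ac n (hDtsub n hxn)
    rw [← hR1U] at hxA
    obtain ⟨m, hxm⟩ := Set.mem_iUnion.1 hxA
    obtain ⟨j, hj⟩ := hblkcover m
    exact Set.mem_iUnion.2 ⟨j, Set.mem_biUnion hj hxm⟩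
  · apply Set.Subset.antisymm
    · refine Set.iUnion_subset fun j => hRtsubAc j
    · intro x hx
      rw [← hR1U] at hx
      obtain ⟨m, hxm⟩ := Set.mem_iUnion.1 hx
      obtain ⟨j, hj⟩ := hblkcover m
      exact Set.mem_iUnion.2 ⟨j, Set.mem_biUnion hj hxm⟩
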